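/- Suppose there exist h > 0 and ε > 0 such that S_h'(ε) < +∞. Then lim_{n→∞} ∫_{nh}^{(n+1)h} ‖σ(s)‖_F² ds = 0, and consequently lim_{t→∞} (1/t) ∫_0^t ‖σ(s)‖_F² ds = 0. -/

import Mathlib

open MeasureTheory Filter

/-- The squared Frobenius norm of `σ(s)`. -/
noncomputable def F2 {d r : ℕ} (σ : ℝ → Matrix (Fin d) (Fin r) ℝ) (s : ℝ) : ℝ :=
  ∑ i : Fin d, ∑ j : Fin r, (σ s i j) ^ 2

/-- `θ_h(n)² = ∫_{nh}^{(n+1)h} ‖σ(s)‖_F² ds`. -/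
noncomputable def theta2 {d r : ℕ} (σ : ℝ → Matrix (Fin d) (Fin r) ℝ) (h : ℝ) (n : ℕ) : ℝ :=
  ∫ s in ((n : ℝ) * h)..(((n : ℝ) + 1) * h), F2 σ s

/-- The `n`-th summand of `S_h'(ε)`, taken to be `0` when `θ_h(n) = 0`. -/
noncomputable def Sterm {d r : ℕ} (σ : ℝ → Matrix (Fin d) (Fin r) ℝ) (h ε : ℝ) (n : ℕ) : ℝ :=
  if theta2 σ h n = 0 then 0
  else Real.sqrt (theta2 σ h n) * Real.exp (-(ε ^ 2) / (2 * theta2 σ h n))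

/-- `S_h'(ε) = ∑_{n=1}^∞ θ_h(n) exp(-ε²/(2θ_h(n)²)) < +∞`.
Since all summands are nonnegative, finiteness is expressed as summability. -/
def SFinite {d r : ℕ} (σ : ℝ → Matrix (Fin d) (Fin r) ℝ) (h ε : ℝ) : Prop :=
  Summable fun n : ℕ => Sterm σ h ε (n + 1)

lemma F2_nonneg {d r : ℕ} (σ : ℝ → Matrix (Fin d) (Fin r) ℝ) (s : ℝ) : 0 ≤ F2 σ s := by
  unfold F2; positivity

lemma F2_contOn {d r : ℕ} (σ : ℝ → Matrix (Fin d) (Fin r) ℝ)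
    (hσ : ContinuousOn σ (Set.Ici 0)) : ContinuousOn (F2 σ) (Set.Ici 0) := by
  unfold F2
  apply continuousOn_finset_sum
  intro i _
  apply continuousOn_finset_sum
  intro j _
  exact (((continuous_apply j).comp (continuous_apply i)).comp_continuousOn hσ).pow 2

lemma F2_intble {d r : ℕ} (σ : ℝ → Matrix (Fin d) (Fin r) ℝ)
    (hσ : ContinuousOn σ (Set.Ici 0)) {a b : ℝ} (ha : 0 ≤ a) (hb : 0 ≤ b) :
    IntervalIntegrable (F2 σ) volume a b := by
  apply ((F2_contOn σ hσ).mono _).intervalIntegrable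
  intro x hx
  have := hx.1
  simp only [Set.mem_Ici]
  calc (0:ℝ) ≤ min a b := le_min ha hb
  _ ≤ x := hx.1

theorem stmt_4 (d r : ℕ) (hd : 1 ≤ d) (hr : 1 ≤ r)
    (σ : ℝ → Matrix (Fin d) (Fin r) ℝ) (hσ : ContinuousOn σ (Set.Ici 0))
    (h ε : ℝ) (hh : 0 < h) (hε : 0 < ε) (hS : SFinite σ h ε) :
    Tendsto (fun n : ℕ => theta2 σ h n) atTop (nhds 0) ∧
    Tendsto (fun t : ℝ => (1 / t) * ∫ s in (0 : ℝ)..t, F2 σ s) atTop (nhds 0) := by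
  have hθ0 : ∀ n : ℕ, 0 ≤ theta2 σ h n := by
    intro n
    apply intervalIntegral.integral_nonneg
    · nlinarith [hh.le, (Nat.cast_nonneg n : (0:ℝ) ≤ n)]
    · intro u _; exact F2_nonneg σ u
  -- Part 1
  have part1 : Tendsto (fun n : ℕ => theta2 σ h n) atTop (nhds 0) := by
    rw [← tendsto_add_atTop_iff_nat 1]
    have hterm : Tendsto (fun n : ℕ => Sterm σ h ε (n + 1)) atTop (nhds 0) :=
      hS.tendsto_atTop_zero
    rw [Metric.tendsto_atTop] at hterm ⊢
    intro δ hδ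
    have hc : 0 < Real.sqrt δ * Real.exp (-(ε ^ 2) / (2 * δ)) := by positivity
    obtain ⟨N, hN⟩ := hterm _ hc
    refine ⟨N, fun n hn => ?_⟩
    have hSn := hN n hn
    rw [Real.dist_eq, sub_zero] at hSn ⊢
    rw [abs_of_nonneg (hθ0 (n + 1))]
    by_contra hcon
    push_neg at hcon
    have hδθ : δ ≤ theta2 σ h (n + 1) := hcon
    have hθpos : 0 < theta2 σ h (n + 1) := lt_of_lt_of_le hδ hδθ
    have hrw : Sterm σ h ε (n + 1) =
        Real.sqrt (theta2 σ h (n + 1)) * Real.exp (-(ε ^ 2) / (2 * theta2 σ h (n + 1))) := by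
      rw [Sterm, if_neg hθpos.ne']
    have hge : Real.sqrt δ * Real.exp (-(ε ^ 2) / (2 * δ)) ≤ Sterm σ h ε (n + 1) := by
      rw [hrw]
      apply mul_le_mul (Real.sqrt_le_sqrt hδθ) _ (Real.exp_nonneg _) (Real.sqrt_nonneg _)
      apply Real.exp_le_exp.mpr
      rw [div_le_div_iff₀ (by linarith) (by linarith)]
      nlinarith [sq_nonneg ε]
    have : |Sterm σ h ε (n + 1)| < Real.sqrt δ * Real.exp (-(ε ^ 2) / (2 * δ)) := hSn
    rw [abs_of_nonneg (hge.trans_lt' (by positivity) |>.le.trans (le_of_eq rfl))] at this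
    · linarith
  refine ⟨part1, ?_⟩
  -- Part 2
  have hintble : ∀ a b : ℝ, 0 ≤ a → 0 ≤ b → IntervalIntegrable (F2 σ) volume a b :=
    fun a b ha hb => F2_intble σ hσ ha hb
  -- sum of θ₂ equals integral up to N h
  have hsum : ∀ N : ℕ, ∑ n ∈ Finset.range N, theta2 σ h n =
      ∫ s in (0 : ℝ)..((N : ℝ) * h), F2 σ s := by
    intro N
    have := intervalIntegral.sum_integral_adjacent_intervals
      (f := F2 σ) (μ := volume) (a := fun k : ℕ => (k : ℝ) * h) (n := N)
      (fun k _ => hintble _ _ (by positivity) (by positivity))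
    simp only [Nat.cast_zero, zero_mul] at this
    rw [← this]
    apply Finset.sum_congr rfl
    intro n _
    rw [theta2]
    push_cast
    ring_nf
  -- Cesàro
  have hces : Tendsto (fun N : ℕ => ((N : ℝ))⁻¹ * ∑ n ∈ Finset.range N, theta2 σ h n)
      atTop (nhds 0) := part1.cesaro
  -- the bounding function
  set G : ℕ → ℝ := fun N => ((N : ℝ) * h)⁻¹ * ∑ n ∈ Finset.range (N + 1), theta2 σ h n with hG
  have hGtend : Tendsto G atTop (nhds 0) := by
    have h1 : Tendsto (fun N : ℕ => ((N : ℝ) + 1) / (N : ℝ) * h⁻¹ *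
        (((N : ℝ) + 1)⁻¹ * ∑ n ∈ Finset.range (N + 1), theta2 σ h n)) atTop (nhds 0) := by
      have ha : Tendsto (fun N : ℕ => ((N : ℝ) + 1) / (N : ℝ)) atTop (nhds 1) := by
        have : (fun N : ℕ => ((N : ℝ) + 1) / (N : ℝ)) =ᶠ[atTop]
            fun N : ℕ => 1 + ((N : ℝ))⁻¹ := by
          filter_upwards [eventually_gt_atTop 0] with N hN
          have : (N : ℝ) ≠ 0 := Nat.cast_ne_zero.mpr hN.ne'
          field_simp
        rw [tendsto_congr' this]
        have := tendsto_inv_atTop_nhds_zero_nat (𝕜 := ℝ)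
        simpa using tendsto_const_nhds.add this
      have hb : Tendsto (fun N : ℕ => ((N : ℝ) + 1)⁻¹ *
          ∑ n ∈ Finset.range (N + 1), theta2 σ h n) atTop (nhds 0) := by
        have := (tendsto_add_atTop_iff_nat 1).mpr hces
        simpa [Nat.cast_add, Nat.cast_one] using this
      have := ((ha.mul_const h⁻¹).mul hb)
      simpa using this
    apply h1.congr'
    filter_upwards [eventually_gt_atTop 0] with N hN
    have hN0 : (N : ℝ) ≠ 0 := Nat.cast_ne_zero.mpr hN.ne'
    rw [hG]
    field_simp
  have hfloor : Tendsto (fun t : ℝ => ⌊t / h⌋₊) atTop atTop :=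
    tendsto_nat_floor_atTop.comp (tendsto_id.atTop_div_const hh)
  have hg : Tendsto (fun t : ℝ => G ⌊t / h⌋₊) atTop (nhds 0) := hGtend.comp hfloor
  apply squeeze_zero' _ _ hg
  · filter_upwards [eventually_ge_atTop h] with t ht
    have ht0 : 0 < t := hh.trans_le ht
    have : 0 ≤ ∫ s in (0 : ℝ)..t, F2 σ s :=
      intervalIntegral.integral_nonneg ht0.le (fun u _ => F2_nonneg σ u)
    positivity
  · filter_upwards [eventually_ge_atTop h] with t ht
    have ht0 : 0 < t := hh.trans_le ht
    set N := ⌊t / h⌋₊ with hNdef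
    have hN1 : 1 ≤ N := by
      apply Nat.one_le_floor_iff _ |>.mpr
      rw [le_div_iff₀ hh]; linarith
    have hNle : (N : ℝ) * h ≤ t := by
      have := Nat.floor_le (by positivity : (0:ℝ) ≤ t / h)
      calc (N : ℝ) * h ≤ (t / h) * h := by
            apply mul_le_mul_of_nonneg_right this hh.le
      _ = t := by field_simp
    have htle : t ≤ ((N : ℝ) + 1) * h := by
      have := (Nat.lt_floor_add_one (t / h)).le
      calc t = (t / h) * h := by field_simp
      _ ≤ ((N : ℝ) + 1) * h := mul_le_mul_of_nonneg_right this hh.le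
    have hNh0 : 0 < (N : ℝ) * h := by
      have : (0:ℝ) < (N:ℝ) := by exact_mod_cast hN1
      positivity
    have hmono : (∫ s in (0 : ℝ)..t, F2 σ s) ≤ ∫ s in (0 : ℝ)..(((N:ℝ)+1) * h), F2 σ s := by
      have hadd := intervalIntegral.integral_add_adjacent_intervals
        (hintble 0 t le_rfl ht0.le) (hintble t (((N:ℝ)+1)*h) ht0.le (by positivity))
      have h2 : 0 ≤ ∫ s in t..(((N:ℝ)+1) * h), F2 σ s :=
        intervalIntegral.integral_nonneg htle (fun u _ => F2_nonneg σ u)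
      linarith
    have hGval : G N = ((N : ℝ) * h)⁻¹ * ∫ s in (0 : ℝ)..(((N:ℝ)+1) * h), F2 σ s := by
      simp only [hG]
      congr 1
      rw [hsum (N + 1)]
      push_cast
      ring_nf
    rw [hGval]
    have hI0 : 0 ≤ ∫ s in (0 : ℝ)..t, F2 σ s :=
      intervalIntegral.integral_nonneg ht0.le (fun u _ => F2_nonneg σ u)
    calc (1 / t) * ∫ s in (0 : ℝ)..t, F2 σ s
        ≤ ((N : ℝ) * h)⁻¹ * ∫ s in (0 : ℝ)..t, F2 σ s := by
          apply mul_le_mul_of_nonneg_right _ hI0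
          rw [one_div]
          exact inv_anti₀ hNh0 hNle
    _ ≤ ((N : ℝ) * h)⁻¹ * ∫ s in (0 : ℝ)..(((N:ℝ)+1) * h), F2 σ s := by
          apply mul_le_mul_of_nonneg_left hmono (by positivity)
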